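/- In any broadcasted LV-game in which every party has at least l candidates (|P_i| ≥ l for all i), any strategy profile S = (s_1, …, s_g) in which each party's ballot consists only of its own candidates (s_i ⊆ P_i for all i) is a pure strategy Nash equilibrium: for every party P_i and every alternative ballot s'_i ⊆ C with |s'_i| = l, U_i(s_1, …, s'_i, …, s_g) ≤ U_i(S). -/

import Mathlib

open Finset

/-- A party-list election frame `F = (N, C, k, l, A)`: voters form the finite type `V`,
candidates the finite type `C`, `k` is the committee size, `l` the ballot limit, and
`A` is a party-list approval profile. -/
structure Frame (V C : Type*) [Fintype V] [DecidableEq V] [Fintype C] [DecidableEq C] where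
  k : ℕ
  l : ℕ
  A : V → Finset C
  k_le_card : k ≤ Fintype.card C
  one_le_l : 1 ≤ l
  l_le_k : l ≤ k
  A_nonempty : ∀ i, (A i).Nonempty
  A_partylist : ∀ i j : V, A i = A j ∨ A i ∩ A j = ∅

variable {V C : Type*} [Fintype V] [DecidableEq V] [Fintype C] [DecidableEq C]

/-- A strategy profile assigns to every voter a ballot; the vote count of a candidate
is the number of voters whose ballot contains it. -/
def voteCount (σ : V → Finset C) (c : C) : ℕ := (univ.filter fun i => c ∈ σ i).card

/-- The total vote count of a committee. -/
def committeeScore (σ : V → Finset C) (W : Finset C) : ℕ := ∑ c ∈ W, voteCount σ c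

/-- The outcome of a strategy profile: the size-`k` committees maximizing the sum of the
vote counts of their members. -/
def Outcome (F : Frame V C) (σ : V → Finset C) : Set (Finset C) :=
  {W | W.card = F.k ∧ ∀ W' : Finset C, W'.card = F.k → committeeScore σ W' ≤ committeeScore σ W}

/-- The utility of party `Pj`: the minimum, over winning committees `W`, of `|W ∩ Pj|`. -/
noncomputable def Util (F : Frame V C) (Pj : Finset C) (σ : V → Finset C) : ℕ :=
  sInf ((fun W => (W ∩ Pj).card) '' Outcome F σ)

/-- A strategy profile is valid when every ballot consists of exactly `l` candidates. -/
def ValidProfile (F : Frame V C) (σ : V → Finset C) : Prop := ∀ i, (σ i).card = F.l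

/-- The number of voters of party `Pj`. -/
def nVoters (F : Frame V C) (Pj : Finset C) : ℕ := (univ.filter fun i => F.A i = Pj).card

/-- The lower quota `q = ⌊k · n_j / n⌋` of party `Pj`. -/
def quota (F : Frame V C) (Pj : Finset C) : ℕ := F.k * nVoters F Pj / Fintype.card V

/-- Party `Pj` plays a lower-quota strategy with support `X` under the profile `σ`:
`X` consists of `quota F Pj` of its own candidates, every ballot of a voter of `Pj` is a
subset of `X`, and every candidate of `X` occurs in either `⌊n_j · l / q_j⌋` or
`⌈n_j · l / q_j⌉` of the ballots of the voters of `Pj`. -/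
def PlaysLQ (F : Frame V C) (σ : V → Finset C) (Pj X : Finset C) : Prop :=
  X ⊆ Pj ∧ X.card = quota F Pj ∧ (∀ i, F.A i = Pj → σ i ⊆ X) ∧
  ∀ c ∈ X,
    (univ.filter fun i => F.A i = Pj ∧ c ∈ σ i).card = nVoters F Pj * F.l / quota F Pj ∨
    (univ.filter fun i => F.A i = Pj ∧ c ∈ σ i).card =
      (nVoters F Pj * F.l + quota F Pj - 1) / quota F Pj

lemma outcome_nonempty (F : Frame V C) (τ : V → Finset C) : (Outcome F τ).Nonempty := by
  obtain ⟨W0, -, hW0⟩ := Finset.exists_subset_card_eq (s := (univ : Finset C)) (n := F.k)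
    (by simpa using F.k_le_card)
  have hT : ((univ : Finset (Finset C)).filter fun W => W.card = F.k).Nonempty :=
    ⟨W0, by simp [hW0]⟩
  obtain ⟨W, hWmem, hWmax⟩ := Finset.exists_max_image _ (committeeScore τ) hT
  simp only [Finset.mem_filter, Finset.mem_univ, true_and] at hWmem
  refine ⟨W, hWmem, fun W' hW' => ?_⟩
  exact hWmax W' (by simp [hW'])

lemma swap_outcome {F : Frame V C} {τ : V → Finset C} {X : Finset C}
    (hX : X ∈ Outcome F τ) {c d : C} (hc : c ∈ X) (hd : d ∉ X) :
    voteCount τ d ≤ voteCount τ c ∧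
      (voteCount τ d = voteCount τ c → insert d (X.erase c) ∈ Outcome F τ) := by
  have hdE : d ∉ X.erase c := fun h => hd (Finset.mem_of_mem_erase h)
  have hcard : (insert d (X.erase c)).card = X.card := by
    rw [Finset.card_insert_of_notMem hdE, Finset.card_erase_of_mem hc]
    exact Nat.succ_pred_eq_of_pos (Finset.card_pos.mpr ⟨c, hc⟩)
  have hscore : committeeScore τ (insert d (X.erase c)) + voteCount τ c
      = committeeScore τ X + voteCount τ d := by
    unfold committeeScore
    rw [Finset.sum_insert hdE, ← Finset.add_sum_erase _ _ hc]
    ring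
  have hmax := hX.2 (insert d (X.erase c)) (hcard.trans hX.1)
  constructor
  · omega
  · intro heq
    refine ⟨hcard.trans hX.1, fun W' hW' => ?_⟩
    have := hX.2 W' hW'
    omega

/-- In any broadcasted LV-game in which every party has at least `l`
candidates, any strategy profile in which each party broadcasts a single ballot drawn
from its own candidates (`s j ⊆ P j`) is a pure strategy Nash equilibrium: no party `j0`
can profit by broadcasting any alternative ballot `s'` to its voters. -/
theorem stmt12 (F : Frame V C) (g : ℕ) (P : Fin g → Finset C)
    (hPinj : Function.Injective P)
    (hPall : ∀ i : V, ∃ j, F.A i = P j)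
    (hPrep : ∀ j, ∃ i : V, F.A i = P j)
    (hPl : ∀ j, F.l ≤ (P j).card)
    (s : Fin g → Finset C) (hscard : ∀ j, (s j).card = F.l) (hssub : ∀ j, s j ⊆ P j)
    (σ : V → Finset C) (hσ : ∀ i (j : Fin g), F.A i = P j → σ i = s j)
    (j0 : Fin g) (s' : Finset C) (hs'card : s'.card = F.l)
    (σ' : V → Finset C)
    (hσ'dev : ∀ i, F.A i = P j0 → σ' i = s')
    (hσ'same : ∀ i, F.A i ≠ P j0 → σ' i = σ i) :
    Util F (P j0) σ' ≤ Util F (P j0) σ := by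
  classical
  -- parties are pairwise disjoint
  have hdisj : ∀ j j' : Fin g, j ≠ j' → ∀ c, c ∈ P j → c ∉ P j' := by
    intro j j' hne c hc hc'
    obtain ⟨i, hi⟩ := hPrep j
    obtain ⟨i', hi'⟩ := hPrep j'
    rcases F.A_partylist i i' with h | h
    · exact hne (hPinj (by rw [← hi, ← hi', h]))
    · have hmem : c ∈ F.A i ∩ F.A i' := by
        rw [hi, hi']; exact Finset.mem_inter.mpr ⟨hc, hc'⟩
      rw [h] at hmem
      exact absurd hmem (Finset.notMem_empty c)
  set n0 := nVoters F (P j0) with hn0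
  -- membership characterizations
  have hmem' : ∀ c, c ∈ P j0 → ∀ i : V, c ∈ σ' i ↔ (F.A i = P j0 ∧ c ∈ s') := by
    intro c hc i
    constructor
    · intro h
      by_cases hA : F.A i = P j0
      · exact ⟨hA, by rwa [hσ'dev i hA] at h⟩
      · exfalso
        obtain ⟨j, hj⟩ := hPall i
        have hjne : j ≠ j0 := fun e => hA (by rw [hj, e])
        have hss : σ' i = s j := by rw [hσ'same i hA, hσ i j hj]
        rw [hss] at h
        exact hdisj j j0 hjne c (hssub j h) hc
    · rintro ⟨hA, hcs⟩; rw [hσ'dev i hA]; exact hcs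
  have hmem0 : ∀ c, c ∈ P j0 → ∀ i : V, c ∈ σ i ↔ (F.A i = P j0 ∧ c ∈ s j0) := by
    intro c hc i
    constructor
    · intro h
      by_cases hA : F.A i = P j0
      · exact ⟨hA, by rwa [hσ i j0 hA] at h⟩
      · exfalso
        obtain ⟨j, hj⟩ := hPall i
        have hjne : j ≠ j0 := fun e => hA (by rw [hj, e])
        rw [hσ i j hj] at h
        exact hdisj j j0 hjne c (hssub j h) hc
    · rintro ⟨hA, hcs⟩; rw [hσ i j0 hA]; exact hcs
  -- vote count facts
  have hvcn' : ∀ c, c ∈ P j0 → c ∈ s' → voteCount σ' c = n0 := by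
    intro c hc hcs
    unfold voteCount; rw [hn0]; unfold nVoters
    congr 1; ext i
    simp [hmem' c hc i, hcs]
  have hvcn : ∀ c, c ∈ s j0 → voteCount σ c = n0 := by
    intro c hcs
    unfold voteCount; rw [hn0]; unfold nVoters
    congr 1; ext i
    simp [hmem0 c (hssub j0 hcs) i, hcs]
  have hpos' : ∀ c, c ∈ P j0 → 0 < voteCount σ' c → c ∈ s' := by
    intro c hc hpos
    obtain ⟨i, hi⟩ := Finset.card_pos.mp hpos
    simp only [Finset.mem_filter] at hi
    exact ((hmem' c hc i).mp hi.2).2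
  have hmono : ∀ d, d ∉ P j0 → voteCount σ d ≤ voteCount σ' d := by
    intro d hd
    apply Finset.card_le_card
    intro i hi
    simp only [Finset.mem_filter, Finset.mem_univ, true_and] at hi ⊢
    have hA : F.A i ≠ P j0 := by
      intro hA
      rw [hσ i j0 hA] at hi
      exact hd (hssub j0 hi)
    rw [hσ'same i hA]; exact hi
  -- minimal winning committees on both sides
  have hne' : ((fun W => (W ∩ P j0).card) '' Outcome F σ').Nonempty :=
    (outcome_nonempty F σ').image _
  have hne : ((fun W => (W ∩ P j0).card) '' Outcome F σ).Nonempty :=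
    (outcome_nonempty F σ).image _
  obtain ⟨W', hW', hW'eq⟩ := Nat.sInf_mem hne'
  obtain ⟨W, hW, hWeq⟩ := Nat.sInf_mem hne
  have hW'c : (W' ∩ P j0).card = sInf ((fun W => (W ∩ P j0).card) '' Outcome F σ') := hW'eq
  have hWc : (W ∩ P j0).card = sInf ((fun W => (W ∩ P j0).card) '' Outcome F σ) := hWeq
  rw [Util, Util, ← hW'c, ← hWc]
  by_contra hcon
  push_neg at hcon
  -- hcon : (W ∩ P j0).card < (W' ∩ P j0).card
  -- Step 1: strict comparison for swaps out of W'
  have hstrict : ∀ c ∈ W' ∩ P j0, ∀ d, d ∉ W' → d ∉ P j0 →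
      voteCount σ' d < voteCount σ' c := by
    intro c hc d hdW hdP
    obtain ⟨hcW, hcP⟩ := Finset.mem_inter.mp hc
    obtain ⟨hle, heq⟩ := swap_outcome hW' hcW hdW
    rcases lt_or_eq_of_le hle with h | h
    · exact h
    exfalso
    have hmem2 := heq h
    have hint : (insert d (W'.erase c)) ∩ P j0 = (W' ∩ P j0).erase c := by
      ext x
      simp only [Finset.mem_inter, Finset.mem_insert, Finset.mem_erase]
      constructor
      · rintro ⟨hx | hx, hxP⟩
        · exact absurd (hx ▸ hxP) hdP
        · exact ⟨hx.1, hx.2, hxP⟩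
      · rintro ⟨hne, hxW, hxP⟩
        exact ⟨Or.inr ⟨hne, hxW⟩, hxP⟩
    have hle2 : sInf ((fun W => (W ∩ P j0).card) '' Outcome F σ')
        ≤ (W' ∩ P j0).card - 1 := by
      refine Nat.sInf_le ⟨_, hmem2, ?_⟩
      simp only [hint, Finset.card_erase_of_mem hc]
    have hpos : 0 < (W' ∩ P j0).card := Finset.card_pos.mpr ⟨c, hc⟩
    omega
  -- Key: W \ P j0 ⊆ W' leads to a contradiction
  have hfinal : W \ P j0 ⊆ W' → False := by
    intro h
    have h2 : W \ P j0 ⊆ W' \ P j0 := fun d hd =>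
      Finset.mem_sdiff.mpr ⟨h hd, (Finset.mem_sdiff.mp hd).2⟩
    have h3 := Finset.card_le_card h2
    have e1 := Finset.card_inter_add_card_sdiff W (P j0)
    have e2 := Finset.card_inter_add_card_sdiff W' (P j0)
    have hk1 : W.card = F.k := hW.1
    have hk2 : W'.card = F.k := hW'.1
    omega
  by_cases hex : ∃ d, d ∉ W' ∧ d ∉ P j0
  · obtain ⟨d0, hd0W, hd0P⟩ := hex
    -- every winner of party j0 under σ' lies in s'
    have hsub : W' ∩ P j0 ⊆ s' ∩ P j0 := by
      intro c hc
      have hcP := (Finset.mem_inter.mp hc).2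
      have h1 := hstrict c hc d0 hd0W hd0P
      exact Finset.mem_inter.mpr ⟨hpos' c hcP (by omega), hcP⟩
    have hm'l : (W' ∩ P j0).card ≤ F.l := by
      calc (W' ∩ P j0).card ≤ (s' ∩ P j0).card := Finset.card_le_card hsub
        _ ≤ s'.card := Finset.card_le_card Finset.inter_subset_left
        _ = F.l := hs'card
    -- some candidate of s j0 is outside W
    have hnsub : ¬ s j0 ⊆ W := by
      intro hsW
      have : s j0 ⊆ W ∩ P j0 := fun x hx => Finset.mem_inter.mpr ⟨hsW hx, hssub j0 hx⟩
      have := Finset.card_le_card this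
      rw [hscard j0] at this
      omega
    obtain ⟨c0, hc0s, hc0W⟩ := Finset.not_subset.mp hnsub
    have hc0n : voteCount σ c0 = n0 := hvcn c0 hc0s
    have hWge : ∀ d ∈ W, n0 ≤ voteCount σ d := by
      intro d hd
      have := (swap_outcome hW hd hc0W).1
      omega
    apply hfinal
    intro d hd
    obtain ⟨hdW, hdP⟩ := Finset.mem_sdiff.mp hd
    by_contra hdW'
    have h1 : n0 ≤ voteCount σ' d := le_trans (hWge d hdW) (hmono d hdP)
    obtain ⟨c, hc⟩ : (W' ∩ P j0).Nonempty := Finset.card_pos.mp (by omega)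
    have h2 := hstrict c hc d hdW' hdP
    have h3 : voteCount σ' c = n0 := by
      have hcm := hsub hc
      exact hvcn' c (Finset.mem_inter.mp hcm).2 (Finset.mem_inter.mp hcm).1
    omega
  · push_neg at hex
    apply hfinal
    intro d hd
    obtain ⟨hdW, hdP⟩ := Finset.mem_sdiff.mp hd
    by_contra hdW'
    exact hdP (hex d hdW')
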